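/- Let M → X_M → P → ΣM and N → X_N → Q → ΣN be distinguished triangles in 𝖳 with X_N ∈ 𝒳, let μ : M → N be a morphism, and suppose s, s' : P → Q are two morphisms both satisfying (Q → ΣN)∘s = (Σμ)∘(P → ΣM) and (Q → ΣN)∘s' = (Σμ)∘(P → ΣM). Then s − s' factors through the object X_N, and in particular through an object of 𝒳. (This shows that the functor σ on the quotient category 𝖳_𝒳 is well-defined on morphisms.) -/

import Mathlib

/-!
STATEMENT 6.  Let `T` be a triangulated category with suspension `Σ` and `𝒳` a class of
objects.  Given distinguished triangles `M → X_M → P → ΣM` and `N → X_N → Q → ΣN` with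
`X_N ∈ 𝒳`, a morphism `μ : M ⟶ N`, and two morphisms `s, s' : P ⟶ Q` both compatible with
`Σμ`, the difference `s - s'` factors through `X_N`, in particular through an object of `𝒳`.
-/

open CategoryTheory CategoryTheory.Limits CategoryTheory.Pretriangulated

theorem sub_factorsThrough_of_compatible_fillers
    {C : Type*} [Category C] [Preadditive C] [HasZeroObject C] [HasShift C ℤ]
    [∀ n : ℤ, (CategoryTheory.shiftFunctor C n).Additive] [Pretriangulated C]
    (𝒳 : Set C)
    (M XM P N XN Q : C)
    (fM : M ⟶ XM) (gM : XM ⟶ P) (hM : P ⟶ M⟦(1 : ℤ)⟧)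
    (fN : N ⟶ XN) (gN : XN ⟶ Q) (hN : Q ⟶ N⟦(1 : ℤ)⟧)
    (hTM : Triangle.mk fM gM hM ∈ distTriang C)
    (hTN : Triangle.mk fN gN hN ∈ distTriang C)
    (hXN : XN ∈ 𝒳)
    (μ : M ⟶ N) (s s' : P ⟶ Q)
    (hs : s ≫ hN = hM ≫ μ⟦(1 : ℤ)⟧')
    (hs' : s' ≫ hN = hM ≫ μ⟦(1 : ℤ)⟧') :
    ∃ (a : P ⟶ XN) (b : XN ⟶ Q), a ≫ b = s - s' := by
  obtain ⟨a, ha⟩ := Triangle.coyoneda_exact₃ _ hTN (s - s')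
    (by show (s - s') ≫ hN = 0; rw [Preadditive.sub_comp, hs, hs', sub_self])
  exact ⟨a, gN, ha.symm⟩
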